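/- Characterisation of the family 𝔊_σ of symmetric and real contractions: given nonzero complex numbers α, β, γ and nonzero m ∈ ℝ, the two conditions (i) there exists c ∈ ℂ with T(T(x)) = c·x for all x ∈ Λ¹, and (ii) T(x*) = (T(x))* for all x ∈ Λ¹, hold simultaneously if and only if β = q⁶ α with α ∈ ℝ and γ ∈ ℝ. -/

import Mathlib

open TensorProduct

noncomputable section

/-- The 3-dimensional complex vector space with basis `ω 0 = ω₋`, `ω 1 = ω₊`, `ω 2 = ω_z`. -/
abbrev V : Type := Fin 3 → ℂ

/-- The distinguished basis `(ω₋, ω₊, ω_z)` of `V`. -/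
def ω : Fin 3 → V := fun i => Pi.basisFun ℂ (Fin 3) i

/-- The degree-2 relations of the exterior algebra of the 3d calculus: each generator is
set equal to `0`.  `RingQuot` of this relation is the quotient of the tensor algebra by the
two-sided ideal generated by the six elements. -/
inductive rel (q : ℝ) : TensorAlgebra ℂ V → TensorAlgebra ℂ V → Prop
  | mm : rel q (TensorAlgebra.ι ℂ (ω 0) * TensorAlgebra.ι ℂ (ω 0)) 0
  | pp : rel q (TensorAlgebra.ι ℂ (ω 1) * TensorAlgebra.ι ℂ (ω 1)) 0
  | zz : rel q (TensorAlgebra.ι ℂ (ω 2) * TensorAlgebra.ι ℂ (ω 2)) 0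
  | mp : rel q (TensorAlgebra.ι ℂ (ω 0) * TensorAlgebra.ι ℂ (ω 1) +
      ((q : ℂ) ^ 2)⁻¹ • (TensorAlgebra.ι ℂ (ω 1) * TensorAlgebra.ι ℂ (ω 0))) 0
  | zm : rel q (TensorAlgebra.ι ℂ (ω 2) * TensorAlgebra.ι ℂ (ω 0) +
      (q : ℂ) ^ 4 • (TensorAlgebra.ι ℂ (ω 0) * TensorAlgebra.ι ℂ (ω 2))) 0
  | zp : rel q (TensorAlgebra.ι ℂ (ω 2) * TensorAlgebra.ι ℂ (ω 1) +
      ((q : ℂ) ^ 4)⁻¹ • (TensorAlgebra.ι ℂ (ω 1) * TensorAlgebra.ι ℂ (ω 2))) 0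

/-- The exterior algebra `Λ` of the 3d calculus. -/
abbrev Lam (q : ℝ) : Type := RingQuot (rel q)

/-- The quotient map `T(V) → Λ`. -/
def mkL (q : ℝ) : TensorAlgebra ℂ V →ₐ[ℂ] Lam q := RingQuot.mkAlgHom ℂ (rel q)

/-- The degree-`k` component `Λᵏ` of `Λ`: the image of the `k`-th power of the degree-1
part of the tensor algebra (the grading induced from the tensor algebra). -/
def gradeL (q : ℝ) (k : ℕ) : Submodule ℂ (Lam q) :=
  Submodule.map (mkL q).toLinearMap
    ((LinearMap.range (TensorAlgebra.ι ℂ : V →ₗ[ℂ] TensorAlgebra ℂ V)) ^ k)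

/-- The images `ω₋, ω₊, ω_z` of the basis 1-forms in `Λ¹`. -/
def ωL (q : ℝ) (a : Fin 3) : Lam q := mkL q (TensorAlgebra.ι ℂ (ω a))

/-- `f₋ = ω₋∧ω_z ∈ Λ²`. -/
def fm (q : ℝ) : Lam q := mkL q (TensorAlgebra.ι ℂ (ω 0) * TensorAlgebra.ι ℂ (ω 2))

/-- `f₊ = ω₊∧ω_z ∈ Λ²`. -/
def fp (q : ℝ) : Lam q := mkL q (TensorAlgebra.ι ℂ (ω 1) * TensorAlgebra.ι ℂ (ω 2))

/-- `f_z = ω₋∧ω₊ ∈ Λ²`. -/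
def fz (q : ℝ) : Lam q := mkL q (TensorAlgebra.ι ℂ (ω 0) * TensorAlgebra.ι ℂ (ω 1))

/-- The top form `θ = ω₋∧ω₊∧ω_z ∈ Λ³`. -/
def θL (q : ℝ) : Lam q :=
  mkL q (TensorAlgebra.ι ℂ (ω 0) * TensorAlgebra.ι ℂ (ω 1) * TensorAlgebra.ι ℂ (ω 2))

/-- `λ₂ = 1 + q²`. -/
def lam2 (q : ℝ) : ℂ := 1 + (q : ℂ) ^ 2

/-- `λ₃ = 1 + 2q² + 2q⁴ + q⁶`. -/
def lam3 (q : ℝ) : ℂ := 1 + 2 * (q : ℂ) ^ 2 + 2 * (q : ℂ) ^ 4 + (q : ℂ) ^ 6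

/-- `T : Λ → Λ` is the Hodge operator of the left-invariant contraction
`g(ω₋,ω₊) = α`, `g(ω₊,ω₋) = β`, `g(ω_z,ω_z) = γ` with volume form `μ = mθ`: these
equations pin down `T` on the basis `1, ω₋, ω₊, ω_z, f₋, f₊, f_z, θ` of `Λ`. -/
def IsHodge (q : ℝ) (α β γ m : ℂ) (T : Lam q →ₗ[ℂ] Lam q) : Prop :=
  T 1 = m • θL q ∧
  T (ωL q 0) = (-(((q : ℂ) ^ 2)⁻¹ * m * β)) • fm q ∧
  T (ωL q 1) = (m * α) • fp q ∧
  T (ωL q 2) = (m * γ) • fz q ∧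
  T (fm q) = (2 * ((q : ℂ) ^ 4)⁻¹ * (lam2 q)⁻¹ * m * β * γ) • ωL q 0 ∧
  T (fp q) = (-(2 * (q : ℂ) ^ 6 * (lam2 q)⁻¹ * m * α * γ)) • ωL q 1 ∧
  T (fz q) = (-(2 * (lam2 q)⁻¹ * m * α * β)) • ωL q 2 ∧
  T (θL q) = (-(6 * (q : ℂ) ^ 4 * (lam3 q)⁻¹ * m * α * β * γ)) • (1 : Lam q)

/-- `st : Λ → Λ` is the antilinear involution determined by the `*`-structure of the
calculus: these equations pin down `st` on the basis `1, ω₋, ω₊, ω_z, f₋, f₊, f_z, θ`. -/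
def IsStar (q : ℝ) (st : Lam q →ₛₗ[starRingEnd ℂ] Lam q) : Prop :=
  st 1 = 1 ∧
  st (ωL q 0) = -ωL q 1 ∧
  st (ωL q 1) = -ωL q 0 ∧
  st (ωL q 2) = -ωL q 2 ∧
  st (fm q) = ((q : ℂ) ^ 4)⁻¹ • fp q ∧
  st (fp q) = (q : ℂ) ^ 4 • fm q ∧
  st (fz q) = -fz q ∧
  st (θL q) = θL q

/-! ### Auxiliary machinery -/

abbrev M4 : Type := Matrix (Fin 4) (Fin 4) ℂ

def E (i j : Fin 4) (c : ℂ) : M4 := Matrix.single i j c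

def fmap (A B C : M4) : V →ₗ[ℂ] M4 where
  toFun v := v 0 • A + v 1 • B + v 2 • C
  map_add' x y := by simp [add_smul]; abel
  map_smul' r x := by simp [smul_smul, smul_add]

lemma fmap_ω0 (A B C : M4) : fmap A B C (ω 0) = A := by simp [fmap, ω, Pi.basisFun_apply]
lemma fmap_ω1 (A B C : M4) : fmap A B C (ω 1) = B := by simp [fmap, ω, Pi.basisFun_apply]
lemma fmap_ω2 (A B C : M4) : fmap A B C (ω 2) = C := by simp [fmap, ω, Pi.basisFun_apply]

lemma repExists (q : ℝ) (A B C : M4)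
    (h1 : A*A = 0) (h2 : B*B = 0) (h3 : C*C = 0)
    (h4 : A*B + ((q:ℂ)^2)⁻¹ • (B*A) = 0)
    (h5 : C*A + (q:ℂ)^4 • (A*C) = 0)
    (h6 : C*B + ((q:ℂ)^4)⁻¹ • (B*C) = 0) :
    ∃ ψ : Lam q →ₐ[ℂ] M4, ψ (ωL q 0) = A ∧ ψ (ωL q 1) = B ∧ ψ (ωL q 2) = C := by
  have w : ∀ ⦃x y : TensorAlgebra ℂ V⦄, rel q x y →
      (TensorAlgebra.lift ℂ (fmap A B C)) x = (TensorAlgebra.lift ℂ (fmap A B C)) y := by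
    intro x y h
    cases h <;>
      simp [map_add, map_mul, map_smul, TensorAlgebra.lift_ι_apply, fmap_ω0, fmap_ω1, fmap_ω2,
        h1, h2, h3, h4, h5, h6]
  refine ⟨RingQuot.liftAlgHom ℂ ⟨TensorAlgebra.lift ℂ (fmap A B C), w⟩, ?_, ?_, ?_⟩ <;>
    simp [ωL, _root_.mkL, RingQuot.liftAlgHom_mkAlgHom_apply, TensorAlgebra.lift_ι_apply,
      fmap_ω0, fmap_ω1, fmap_ω2]

lemma fz_eq_mul (q : ℝ) : fz q = ωL q 0 * ωL q 1 := by
  simp [fz, ωL, map_mul]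

lemma fp_eq_mul (q : ℝ) : fp q = ωL q 1 * ωL q 2 := by
  simp [fp, ωL, map_mul]

/-- The representation used to separate `ω₋` and `f_z`. -/
lemma rep_fz (q : ℝ) (hq : (q:ℂ) ≠ 0) :
    ∃ ψ : Lam q →ₐ[ℂ] M4, ψ (ωL q 0) ≠ 0 ∧ ψ (fz q) ≠ 0 := by
  obtain ⟨ψ, hA, hB, hC⟩ := repExists q (E 0 2 1 + E 1 3 (-(q:ℂ)^2)) (E 0 1 1 + E 2 3 1) 0
    (by simp [E, add_mul, mul_add, Matrix.single_mul_single_of_ne])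
    (by simp [E, add_mul, mul_add, Matrix.single_mul_single_of_ne])
    (by simp)
    (by
      simp [E, add_mul, mul_add, Matrix.single_mul_single_of_ne, Matrix.single_mul_single_same,
        Matrix.smul_single, smul_smul]
      rw [← Matrix.single_add,
        show (1 : ℂ) + -(((q:ℂ)^2)⁻¹ * (q:ℂ)^2) = 0 by field_simp; ring]
      simp)
    (by simp) (by simp)
  refine ⟨ψ, ?_, ?_⟩
  · rw [hA]
    intro h
    have := congrFun (congrFun h 0) 2
    simp [E, Matrix.single] at this
  · rw [fz_eq_mul, map_mul, hA, hB,
      show (E 0 2 1 + E 1 3 (-(q:ℂ)^2)) * (E 0 1 1 + E 2 3 1) = E 0 3 1 by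
        simp [E, add_mul, mul_add, Matrix.single_mul_single_of_ne, Matrix.single_mul_single_same]]
    intro h
    have := congrFun (congrFun h 0) 3
    simp [E, Matrix.single] at this

/-- The representation used to separate `ω_z` and `f₊`. -/
lemma rep_fp (q : ℝ) (hq : (q:ℂ) ≠ 0) :
    ∃ ψ : Lam q →ₐ[ℂ] M4, ψ (ωL q 2) ≠ 0 ∧ ψ (fp q) ≠ 0 := by
  obtain ⟨ψ, hA, hB, hC⟩ := repExists q 0 (E 0 2 1 + E 1 3 (-((q:ℂ)^4)⁻¹)) (E 0 1 1 + E 2 3 1)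
    (by simp)
    (by simp [E, add_mul, mul_add, Matrix.single_mul_single_of_ne])
    (by simp [E, add_mul, mul_add, Matrix.single_mul_single_of_ne])
    (by simp) (by simp)
    (by
      simp [E, add_mul, mul_add, Matrix.single_mul_single_of_ne, Matrix.single_mul_single_same,
        Matrix.smul_single, smul_smul]
      rw [← Matrix.single_add,
        show (-((q:ℂ)^4)⁻¹ + ((q:ℂ)^4)⁻¹ : ℂ) = 0 by ring]
      simp)
  refine ⟨ψ, ?_, ?_⟩
  · rw [hC]
    intro h
    have := congrFun (congrFun h 0) 1
    simp [E, Matrix.single] at this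
  · rw [fp_eq_mul, map_mul, hB, hC,
      show (E 0 2 1 + E 1 3 (-((q:ℂ)^4)⁻¹)) * (E 0 1 1 + E 2 3 1) = E 0 3 1 by
        simp [E, add_mul, mul_add, Matrix.single_mul_single_of_ne, Matrix.single_mul_single_same]]
    intro h
    have := congrFun (congrFun h 0) 3
    simp [E, Matrix.single] at this

lemma smul_cancel {q : ℝ} {v : Lam q} (ψ : Lam q →ₐ[ℂ] M4) (hv : ψ v ≠ 0) {s t : ℂ}
    (h : s • v = t • v) : s = t := by
  have h2 : (s - t) • ψ v = 0 := by
    rw [sub_smul, sub_eq_zero, ← map_smul, ← map_smul, h]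
  rcases smul_eq_zero.mp h2 with h' | h'
  · exact sub_eq_zero.mp h'
  · exact absurd h' hv

lemma ωL_mem_grade1 (q : ℝ) (a : Fin 3) : ωL q a ∈ gradeL q 1 := by
  rw [gradeL, pow_one]
  exact ⟨TensorAlgebra.ι ℂ (ω a), ⟨ω a, rfl⟩, rfl⟩

lemma mem_grade1 {q : ℝ} {x : Lam q} (hx : x ∈ gradeL q 1) :
    ∃ v : V, x = v 0 • ωL q 0 + v 1 • ωL q 1 + v 2 • ωL q 2 := by
  rw [gradeL, pow_one] at hx
  obtain ⟨y, ⟨v, rfl⟩, rfl⟩ := hx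
  refine ⟨v, ?_⟩
  have hv : v = v 0 • ω 0 + v 1 • ω 1 + v 2 • ω 2 := by
    funext i; fin_cases i <;> simp [ω, Pi.basisFun_apply]
  conv_lhs => rw [hv]
  simp [ωL, _root_.mkL, map_add, map_smul]

lemma lam_neg_smul {q : ℝ} (s : ℂ) (v : Lam q) : -(s • v) = (-s) • v := (neg_smul s v).symm

lemma lam_smul_neg {q : ℝ} (s : ℂ) (v : Lam q) : s • (-v) = (-s) • v :=
  (smul_neg s v).trans (neg_smul s v).symm

/-- characterisation of the family `𝔊_σ`: the Hodge operator is both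
symmetric (`T²` scalar on `Λ¹`) and real (`T(x*) = (T(x))*` on `Λ¹`) if and only if
`β = q⁶α` with `α ∈ ℝ` and `γ ∈ ℝ`. -/
theorem hodge_symmetric_and_real_iff (q : ℝ) (hq0 : 0 < q) (hq1 : q < 1)
    (α β γ : ℂ) (m : ℝ) (hα : α ≠ 0) (hβ : β ≠ 0) (hγ : γ ≠ 0) (hm : m ≠ 0)
    (T : Lam q →ₗ[ℂ] Lam q) (hT : IsHodge q α β γ (m : ℂ) T)
    (st : Lam q →ₛₗ[starRingEnd ℂ] Lam q) (hst : IsStar q st) :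
    ((∃ c : ℂ, ∀ x ∈ gradeL q 1, T (T x) = c • x) ∧
        (∀ x ∈ gradeL q 1, T (st x) = st (T x))) ↔
      (β = (q : ℂ) ^ 6 * α ∧ (starRingEnd ℂ) α = α ∧ (starRingEnd ℂ) γ = γ) := by
  obtain ⟨hT1, hTm, hTp, hTz, hTfm, hTfp, hTfz, hTθ⟩ := hT
  obtain ⟨hs1, hsm, hsp, hsz, hsfm, hsfp, hsfz, hsθ⟩ := hst
  have hq : (q : ℂ) ≠ 0 := Complex.ofReal_ne_zero.mpr (ne_of_gt hq0)
  have hmC : (m : ℂ) ≠ 0 := Complex.ofReal_ne_zero.mpr hm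
  have hL : lam2 q ≠ 0 := by
    rw [lam2, show (1 : ℂ) + (q:ℂ)^2 = ((1 + q^2 : ℝ) : ℂ) by push_cast; ring]
    rw [Complex.ofReal_ne_zero]
    positivity
  obtain ⟨ψz, hψz0, hψzfz⟩ := rep_fz q hq
  obtain ⟨ψp, hψp2, hψpfp⟩ := rep_fp q hq
  constructor
  · rintro ⟨⟨c, hc⟩, hreal⟩
    have h0 := hc _ (ωL_mem_grade1 q 0)
    rw [hTm, map_smul, hTfm, smul_smul] at h0
    have E1 : (-(((q:ℂ)^2)⁻¹ * m * β)) * (2 * ((q:ℂ)^4)⁻¹ * (lam2 q)⁻¹ * m * β * γ) = c :=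
      smul_cancel ψz hψz0 h0
    have h2 := hc _ (ωL_mem_grade1 q 2)
    rw [hTz, map_smul, hTfz, smul_smul] at h2
    have E2 : ((m:ℂ) * γ) * (-(2 * (lam2 q)⁻¹ * m * α * β)) = c :=
      smul_cancel ψp hψp2 h2
    have h3 := hreal _ (ωL_mem_grade1 q 0)
    rw [hsm, map_neg, hTp, hTm, map_smulₛₗ, hsfm, smul_smul, lam_neg_smul] at h3
    have E3 : -((m:ℂ) * α) = (starRingEnd ℂ) (-(((q:ℂ)^2)⁻¹ * m * β)) * ((q:ℂ)^4)⁻¹ :=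
      smul_cancel ψp hψpfp h3
    have h4 := hreal _ (ωL_mem_grade1 q 2)
    rw [hsz, map_neg, hTz, map_smulₛₗ, hsfz, lam_smul_neg, lam_neg_smul] at h4
    have E4 : -((m:ℂ) * γ) = -((starRingEnd ℂ) ((m:ℂ) * γ)) :=
      smul_cancel ψz hψzfz h4
    have E12 := E1.trans E2.symm
    field_simp at E12
    have key : β * β = ((q:ℂ)^6 * α) * β := by
      have h' : (β * β) * ((m:ℂ) * m * γ * 2 * lam2 q)
          = (((q:ℂ)^6 * α) * β) * ((m:ℂ) * m * γ * 2 * lam2 q) := by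
        linear_combination (-(β * ((m:ℂ) * m * γ * 2 * lam2 q))) * E12
      exact mul_right_cancel₀
        (mul_ne_zero (mul_ne_zero (mul_ne_zero (mul_ne_zero hmC hmC) hγ) two_ne_zero) hL) h'
    have hβα : β = (q:ℂ)^6 * α := mul_right_cancel₀ hβ key
    simp only [map_neg, map_mul, map_inv₀, map_pow, Complex.conj_ofReal] at E3
    field_simp at E3
    have hconjβ : (starRingEnd ℂ) β = (q:ℂ)^6 * α := by
      have h' : (starRingEnd ℂ) β * (m:ℂ) = ((q:ℂ)^6 * α) * (m:ℂ) := by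
        linear_combination (m:ℂ) * E3
      exact mul_right_cancel₀ hmC h'
    have hconjα : (starRingEnd ℂ) α = α := by
      have h6 : (q:ℂ)^6 * (starRingEnd ℂ) α = (q:ℂ)^6 * α := by
        rw [← hconjβ, hβα]; simp [map_mul, Complex.conj_ofReal]
      exact mul_left_cancel₀ (pow_ne_zero 6 hq) h6
    refine ⟨hβα, hconjα, ?_⟩
    simp only [map_mul, Complex.conj_ofReal, neg_inj] at E4
    exact (mul_left_cancel₀ hmC E4).symm
  · rintro ⟨hβα, hcα, hcγ⟩
    have hTT0 : T (T (ωL q 0)) = (-(2 * (q:ℂ)^6 * (lam2 q)⁻¹ * m^2 * α^2 * γ)) • ωL q 0 := by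
      rw [hTm, map_smul, hTfm, smul_smul]
      congr 1
      rw [hβα]
      field_simp
    have hTT1 : T (T (ωL q 1)) = (-(2 * (q:ℂ)^6 * (lam2 q)⁻¹ * m^2 * α^2 * γ)) • ωL q 1 := by
      rw [hTp, map_smul, hTfp, smul_smul]
      congr 1
      ring
    have hTT2 : T (T (ωL q 2)) = (-(2 * (q:ℂ)^6 * (lam2 q)⁻¹ * m^2 * α^2 * γ)) • ωL q 2 := by
      rw [hTz, map_smul, hTfz, smul_smul]
      congr 1
      rw [hβα]
      ring
    have hR0 : T (st (ωL q 0)) = st (T (ωL q 0)) := by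
      rw [hsm, map_neg, hTp, hTm, map_smulₛₗ, hsfm, smul_smul, lam_neg_smul]
      congr 1
      simp only [map_neg, map_mul, map_inv₀, map_pow, Complex.conj_ofReal, hβα, hcα]
      field_simp
    have hR1 : T (st (ωL q 1)) = st (T (ωL q 1)) := by
      rw [hsp, map_neg, hTm, lam_neg_smul, neg_neg, hTp, map_smulₛₗ, hsfp, smul_smul]
      congr 1
      simp only [map_mul, Complex.conj_ofReal, hβα, hcα]
      field_simp
    have hR2 : T (st (ωL q 2)) = st (T (ωL q 2)) := by
      rw [hsz, map_neg, hTz, map_smulₛₗ, hsfz, lam_smul_neg, lam_neg_smul]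
      congr 1
      simp only [map_mul, Complex.conj_ofReal, hcγ]
    refine ⟨⟨-(2 * (q:ℂ)^6 * (lam2 q)⁻¹ * m^2 * α^2 * γ), ?_⟩, ?_⟩
    · intro x hx
      obtain ⟨v, rfl⟩ := mem_grade1 hx
      simp only [map_add, map_smul, hTT0, hTT1, hTT2]
      module
    · intro x hx
      obtain ⟨v, rfl⟩ := mem_grade1 hx
      simp only [map_add, map_smul, map_smulₛₗ, hR0, hR1, hR2]

end
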